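/- For every λ ∈ [0,1] and every d ≥ 1, the relative isoperimetric profiles of the unit cubes satisfy I_{(0,1)^{d+1}}(λ) ≤ I_{(0,1)^d}(λ). -/

import Mathlib

open MeasureTheory Real
open scoped RealInnerProductSpace MeasureTheory ENNReal symmDiff

noncomputable section

/-- The one-dimensional standard Gaussian density `φ(t) = (2π)^{-1/2} exp(-t²/2)`. -/
def gaussPdf (t : ℝ) : ℝ := (Real.sqrt (2 * Real.pi))⁻¹ * Real.exp (-t ^ 2 / 2)

/-- The `d`-dimensional standard Gaussian density `φ_d(x) = (2π)^{-d/2} exp(-|x|²/2)`. -/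
def gaussPdfD (d : ℕ) (x : EuclideanSpace ℝ (Fin d)) : ℝ :=
  (2 * Real.pi) ^ (-(d : ℝ) / 2) * Real.exp (-‖x‖ ^ 2 / 2)

/-- The standard Gaussian measure `γ_d` on `ℝ^d`. -/
def gaussMeasure (d : ℕ) : Measure (EuclideanSpace ℝ (Fin d)) :=
  volume.withDensity fun x => ENNReal.ofReal (gaussPdfD d x)

/-- The Gaussian-weighted `(d-1)`-dimensional Hausdorff measure `H^{d-1}_{γ_d} = φ_d · H^{d-1}`. -/
def gaussHaus (d : ℕ) : Measure (EuclideanSpace ℝ (Fin d)) :=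
  (μH[(d : ℝ) - 1]).withDensity fun x => ENNReal.ofReal (gaussPdfD d x)

/-- The open unit cube `(0,1)^d`. -/
def unitCube (d : ℕ) : Set (EuclideanSpace ℝ (Fin d)) :=
  {x | ∀ i, x i ∈ Set.Ioo (0 : ℝ) 1}

/-- The relative perimeter `Per(E, Ω)`: the total variation of the distributional gradient of
the indicator of `E` in `Ω`, i.e. the supremum of `∫_E div X` over `C¹` vector fields `X`
compactly supported in `Ω` with `‖X‖ ≤ 1`. -/
def relPerimeter (d : ℕ) (E Ω : Set (EuclideanSpace ℝ (Fin d))) : ℝ≥0∞ :=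
  ⨆ (X : EuclideanSpace ℝ (Fin d) → EuclideanSpace ℝ (Fin d)) (_ : ContDiff ℝ 1 X)
    (_ : HasCompactSupport X) (_ : tsupport X ⊆ Ω) (_ : ∀ x, ‖X x‖ ≤ 1),
    ENNReal.ofReal (∫ x in E, ∑ i, fderiv ℝ X x (EuclideanSpace.single i 1) i)

/-- The one-dimensional standard Gaussian CDF `Φ`. -/
def gaussCdf (t : ℝ) : ℝ := ∫ s in Set.Iic t, gaussPdf s

/-- The Gaussian isoperimetric profile `I_γ = φ ∘ Φ⁻¹`, extended by `0` outside `(0,1)`. -/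
def gaussIsopProfile (l : ℝ) : ℝ :=
  if l ≤ 0 ∨ 1 ≤ l then 0 else gaussPdf (Function.invFun gaussCdf l)

/-- The relative isoperimetric profile of the unit cube `(0,1)^d`. -/
def cubeIsopProfile (d : ℕ) (l : ℝ) : ℝ≥0∞ :=
  ⨅ (E : Set (EuclideanSpace ℝ (Fin d))) (_ : MeasurableSet E) (_ : E ⊆ unitCube d)
    (_ : volume E = ENNReal.ofReal l), relPerimeter d E (unitCube d)

/-- The measure-theoretic (essential) boundary of a set: points where the volume density of `E`
neither tends to `0` nor to `1`; for a set of finite perimeter it carries the same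
`H^{d-1}`-measure as the reduced boundary `∂*E`. -/
def essBoundary (d : ℕ) (E : Set (EuclideanSpace ℝ (Fin d))) : Set (EuclideanSpace ℝ (Fin d)) :=
  {x | ¬ Filter.Tendsto (fun r : ℝ => volume (E ∩ Metric.ball x r) / volume (Metric.ball x r))
        (nhdsWithin 0 (Set.Ioi 0)) (nhds 0) ∧
       ¬ Filter.Tendsto (fun r : ℝ => volume (E ∩ Metric.ball x r) / volume (Metric.ball x r))
        (nhdsWithin 0 (Set.Ioi 0)) (nhds 1)}

end

noncomputable section Aux

namespace IsopAux

open Set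

/-- Insert `t` as the `0`-th coordinate. -/
def emb (d : ℕ) (t : ℝ) (x : EuclideanSpace ℝ (Fin d)) : EuclideanSpace ℝ (Fin (d+1)) :=
  WithLp.toLp 2 (Fin.insertNth 0 t x.ofLp)

@[simp] lemma emb_zero (d : ℕ) (t : ℝ) (x : EuclideanSpace ℝ (Fin d)) : emb d t x 0 = t := by
  simp [emb]

@[simp] lemma emb_succ (d : ℕ) (t : ℝ) (x : EuclideanSpace ℝ (Fin d)) (j : Fin d) :
    emb d t x j.succ = x j := by
  rw [emb, ← Fin.zero_succAbove j, WithLp.ofLp_toLp, Fin.insertNth_apply_succAbove]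

def TEquiv (d : ℕ) : (ℝ × EuclideanSpace ℝ (Fin d)) ≃ᵐ EuclideanSpace ℝ (Fin (d+1)) :=
  ((MeasurableEquiv.refl ℝ).prodCongr (MeasurableEquiv.toLp 2 (Fin d → ℝ)).symm).trans
    ((MeasurableEquiv.piFinSuccAbove (fun _ : Fin (d+1) => ℝ) 0).symm.trans
      (MeasurableEquiv.toLp 2 (Fin (d+1) → ℝ)))

lemma TEquiv_apply (d : ℕ) (p : ℝ × EuclideanSpace ℝ (Fin d)) : TEquiv d p = emb d p.1 p.2 := rfl

lemma TEquiv_mp (d : ℕ) :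
    MeasurePreserving (TEquiv d) ((volume : Measure ℝ).prod volume) volume := by
  have h1 := (EuclideanSpace.volume_preserving_symm_measurableEquiv_toLp (Fin d))
  have h2 := (volume_preserving_piFinSuccAbove (fun _ : Fin (d+1) => ℝ) 0).symm
  have h3 := (EuclideanSpace.volume_preserving_symm_measurableEquiv_toLp (Fin (d+1))).symm
  exact (h3.comp h2).comp ((MeasurePreserving.id _).prod h1)

variable {d : ℕ}

/-- The projection forgetting the `0`-th coordinate, as a continuous linear map. -/
def projL (d : ℕ) : EuclideanSpace ℝ (Fin (d+1)) →L[ℝ] EuclideanSpace ℝ (Fin d) :=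
  LinearMap.toContinuousLinearMap
    { toFun := fun y => WithLp.toLp 2 (fun j => y j.succ : Fin d → ℝ)
      map_add' := fun a b => by ext j; simp
      map_smul' := fun c a => by ext j; simp }

@[simp] lemma projL_apply (y : EuclideanSpace ℝ (Fin (d+1))) (j : Fin d) :
    projL d y j = y j.succ := rfl

@[simp] lemma projL_emb (t : ℝ) (x : EuclideanSpace ℝ (Fin d)) : projL d (emb d t x) = x := by
  ext j; simp

/-- The linear embedding `x ↦ (0, x)`. -/
def embL (d : ℕ) : EuclideanSpace ℝ (Fin d) →L[ℝ] EuclideanSpace ℝ (Fin (d+1)) :=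
  LinearMap.toContinuousLinearMap
    { toFun := fun x => emb d 0 x
      map_add' := fun a b => by
        ext i
        refine Fin.cases ?_ ?_ i <;> simp
      map_smul' := fun c a => by
        ext i
        refine Fin.cases ?_ ?_ i <;> simp }

@[simp] lemma embL_zero' (x : EuclideanSpace ℝ (Fin d)) : embL d x 0 = 0 := by simp [embL]
@[simp] lemma embL_succ (x : EuclideanSpace ℝ (Fin d)) (j : Fin d) : embL d x j.succ = x j := by
  simp [embL]

lemma emb_eq_affine (t : ℝ) (x : EuclideanSpace ℝ (Fin d)) :
    emb d t x = emb d t 0 + embL d x := by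
  ext i; refine Fin.cases ?_ ?_ i <;> simp [PiLp.add_apply]

lemma hasFDerivAt_emb (t : ℝ) (x : EuclideanSpace ℝ (Fin d)) :
    HasFDerivAt (fun x => emb d t x) (embL d) x := by
  have : (fun x : EuclideanSpace ℝ (Fin d) => emb d t x) = fun x => emb d t 0 + embL d x := by
    funext x; exact emb_eq_affine t x
  rw [this]
  exact (embL d).hasFDerivAt.const_add _

lemma continuous_emb_right (t : ℝ) : Continuous (fun x : EuclideanSpace ℝ (Fin d) => emb d t x) := by
  have : (fun x : EuclideanSpace ℝ (Fin d) => emb d t x) = fun x => emb d t 0 + embL d x := by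
    funext x; exact emb_eq_affine t x
  rw [this]
  exact continuous_const.add (embL d).continuous

lemma emb_eq_line (x : EuclideanSpace ℝ (Fin d)) (t : ℝ) :
    emb d t x = emb d 0 x + t • EuclideanSpace.single (0 : Fin (d+1)) (1:ℝ) := by
  ext i; refine Fin.cases ?_ ?_ i <;>
    simp [PiLp.add_apply, PiLp.smul_apply, EuclideanSpace.single_apply, Fin.succ_ne_zero]

lemma continuous_emb_left (x : EuclideanSpace ℝ (Fin d)) :
    Continuous (fun t : ℝ => emb d t x) := by
  have : (fun t : ℝ => emb d t x)
      = fun t => emb d 0 x + t • EuclideanSpace.single (0 : Fin (d+1)) (1:ℝ) := by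
    funext t; exact emb_eq_line x t
  rw [this]
  exact continuous_const.add (continuous_id.smul continuous_const)

lemma continuous_emb_prod :
    Continuous (fun p : ℝ × EuclideanSpace ℝ (Fin d) => emb d p.1 p.2) := by
  have : (fun p : ℝ × EuclideanSpace ℝ (Fin d) => emb d p.1 p.2)
      = fun p => (emb d 0 0 + p.1 • EuclideanSpace.single (0 : Fin (d+1)) (1:ℝ)) + embL d p.2 := by
    funext p
    rw [← emb_eq_line, ← emb_eq_affine]
  rw [this]
  exact (continuous_const.add (continuous_fst.smul continuous_const)).add
    ((embL d).continuous.comp continuous_snd)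

lemma hasDerivAt_emb (x : EuclideanSpace ℝ (Fin d)) (t : ℝ) :
    HasDerivAt (fun t => emb d t x) (EuclideanSpace.single (0 : Fin (d+1)) (1:ℝ)) t := by
  have : (fun t : ℝ => emb d t x)
      = fun t => emb d 0 x + t • EuclideanSpace.single (0 : Fin (d+1)) (1:ℝ) := by
    funext t; exact emb_eq_line x t
  rw [this]
  simpa using ((hasDerivAt_id t).smul_const
    (EuclideanSpace.single (0 : Fin (d+1)) (1:ℝ))).const_add (emb d 0 x)

lemma embL_single (j : Fin d) :
    embL d (EuclideanSpace.single j (1:ℝ)) = EuclideanSpace.single j.succ (1:ℝ) := by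
  ext i; refine Fin.cases ?_ ?_ i <;>
    simp [EuclideanSpace.single_apply, Fin.succ_ne_zero, Fin.succ_inj,
      eq_comm (a := (0 : Fin (d+1)))]

lemma norm_projL_le (y : EuclideanSpace ℝ (Fin (d+1))) : ‖projL d y‖ ≤ ‖y‖ := by
  rw [EuclideanSpace.norm_eq, EuclideanSpace.norm_eq]
  apply Real.sqrt_le_sqrt
  rw [Fin.sum_univ_succ]
  simpa using add_nonneg (sq_nonneg ‖y 0‖) (le_refl _)

lemma abs_coord_le_norm {n : ℕ} (y : EuclideanSpace ℝ (Fin n)) (i : Fin n) : |y i| ≤ ‖y‖ := by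
  rw [EuclideanSpace.norm_eq, ← Real.sqrt_sq_eq_abs]
  apply Real.sqrt_le_sqrt
  simpa using Finset.single_le_sum (f := fun j => ‖y j‖ ^ 2)
    (fun j _ => sq_nonneg _) (Finset.mem_univ i)

section VectorField

variable (X : EuclideanSpace ℝ (Fin (d+1)) → EuclideanSpace ℝ (Fin (d+1)))

/-- The horizontal part of `X` along the slice at height `t`. -/
def Yf (t : ℝ) : EuclideanSpace ℝ (Fin d) → EuclideanSpace ℝ (Fin d) :=
  fun x => projL d (X (emb d t x))

variable (hX1 : ContDiff ℝ 1 X)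

section
include hX1

lemma contDiff_Yf (t : ℝ) : ContDiff ℝ 1 (Yf X t) := by
  have h1 : ContDiff ℝ 1 (fun x : EuclideanSpace ℝ (Fin d) => emb d t x) := by
    have : (fun x : EuclideanSpace ℝ (Fin d) => emb d t x) = fun x => emb d t 0 + embL d x := by
      funext x; exact emb_eq_affine t x
    rw [this]; exact contDiff_const.add (embL d).contDiff
  exact (projL d).contDiff.comp (hX1.comp h1)

lemma hasFDerivAt_Yf (t : ℝ) (x : EuclideanSpace ℝ (Fin d)) :
    HasFDerivAt (Yf X t) (((projL d).comp (fderiv ℝ X (emb d t x))).comp (embL d)) x := by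
  have hd : HasFDerivAt X (fderiv ℝ X (emb d t x)) (emb d t x) :=
    (hX1.differentiable one_ne_zero _).hasFDerivAt
  exact (projL d).hasFDerivAt.comp x (hd.comp x (hasFDerivAt_emb t x))

lemma fderiv_Yf (t : ℝ) (x : EuclideanSpace ℝ (Fin d)) (j : Fin d) :
    fderiv ℝ (Yf X t) x (EuclideanSpace.single j 1) j
      = fderiv ℝ X (emb d t x) (EuclideanSpace.single j.succ 1) j.succ := by
  rw [(hasFDerivAt_Yf X hX1 t x).fderiv]
  simp [embL_single]

lemma hasDerivAt_coord (x : EuclideanSpace ℝ (Fin d)) (t : ℝ) (i : Fin (d+1)) :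
    HasDerivAt (fun t => X (emb d t x) i)
      (fderiv ℝ X (emb d t x) (EuclideanSpace.single (0 : Fin (d+1)) 1) i) t := by
  have hd : HasFDerivAt X (fderiv ℝ X (emb d t x)) (emb d t x) :=
    (hX1.differentiable one_ne_zero _).hasFDerivAt
  have h1 : HasDerivAt (fun t => X (emb d t x))
      (fderiv ℝ X (emb d t x) (EuclideanSpace.single (0 : Fin (d+1)) 1)) t :=
    hd.comp_hasDerivAt t (hasDerivAt_emb x t)
  exact (EuclideanSpace.proj i).hasFDerivAt.comp_hasDerivAt t h1

end

lemma tsupport_Yf_subset (t : ℝ) :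
    tsupport (Yf X t) ⊆ (fun x : EuclideanSpace ℝ (Fin d) => emb d t x) ⁻¹' (tsupport X) := by
  apply closure_minimal
  · intro x hx
    simp only [Function.mem_support, Set.mem_preimage] at hx ⊢
    apply subset_tsupport
    simp only [Function.mem_support]
    intro h0
    apply hx
    simp [Yf, h0]
  · exact (isClosed_tsupport X).preimage (continuous_emb_right t)

lemma hasCompactSupport_Yf (hX2 : HasCompactSupport X) (t : ℝ) :
    HasCompactSupport (Yf X t) := by
  have hclosed : IsClosed ((fun x : EuclideanSpace ℝ (Fin d) => emb d t x) ⁻¹' (tsupport X)) :=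
    (isClosed_tsupport X).preimage (continuous_emb_right t)
  have hsub2 : (fun x : EuclideanSpace ℝ (Fin d) => emb d t x) ⁻¹' (tsupport X)
      ⊆ projL d '' (tsupport X) := fun x hx => ⟨emb d t x, hx, projL_emb t x⟩
  have hcompact : IsCompact (projL d '' tsupport X) := hX2.image (projL d).continuous
  exact IsCompact.of_isClosed_subset hcompact (isClosed_tsupport _)
    ((tsupport_Yf_subset X t).trans hsub2)

lemma tsupport_Yf_cube (hX3 : tsupport X ⊆ unitCube (d+1)) (t : ℝ) :
    tsupport (Yf X t) ⊆ unitCube d := by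
  intro x hx
  have h1 : emb d t x ∈ tsupport X := tsupport_Yf_subset X t hx
  intro j
  have h2 := hX3 h1 j.succ
  rwa [emb_succ] at h2

lemma norm_Yf_le (hX4 : ∀ y, ‖X y‖ ≤ 1) (t : ℝ) (x : EuclideanSpace ℝ (Fin d)) :
    ‖Yf X t x‖ ≤ 1 := (norm_projL_le _).trans (hX4 _)

include hX1 in
lemma ftc_coord (hX3 : tsupport X ⊆ unitCube (d+1)) (x : EuclideanSpace ℝ (Fin d)) :
    ∫ t in Set.Ioo (0:ℝ) 1,
      fderiv ℝ X (emb d t x) (EuclideanSpace.single (0 : Fin (d+1)) 1) 0 = 0 := by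
  have hcont : Continuous
      (fun t : ℝ => fderiv ℝ X (emb d t x) (EuclideanSpace.single (0 : Fin (d+1)) 1) 0) := by
    have h1 : Continuous (fderiv ℝ X) := hX1.continuous_fderiv one_ne_zero
    exact (EuclideanSpace.proj (0 : Fin (d+1))).continuous.comp
      (((ContinuousLinearMap.apply ℝ (EuclideanSpace ℝ (Fin (d+1))))
          (EuclideanSpace.single (0 : Fin (d+1)) 1)).continuous.comp
        (h1.comp (continuous_emb_left x)))
  rw [← integral_Ioc_eq_integral_Ioo, ← intervalIntegral.integral_of_le zero_le_one]
  rw [intervalIntegral.integral_eq_sub_of_hasDerivAt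
    (f := fun t => X (emb d t x) 0) (fun t _ => hasDerivAt_coord X hX1 x t 0)
    (hcont.intervalIntegrable 0 1)]
  have h1 : X (emb d 1 x) = 0 := by
    apply image_eq_zero_of_notMem_tsupport
    intro hmem
    have := hX3 hmem 0
    rw [emb_zero] at this
    exact lt_irrefl 1 this.2
  have h0 : X (emb d 0 x) = 0 := by
    apply image_eq_zero_of_notMem_tsupport
    intro hmem
    have := hX3 hmem 0
    rw [emb_zero] at this
    exact lt_irrefl 0 this.1
  simp [h1, h0]

end VectorField

end IsopAux

end Aux

open IsopAux in
lemma relPerimeter_cylinder_le (d : ℕ) (E : Set (EuclideanSpace ℝ (Fin d)))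
    (hE : MeasurableSet E) (hEsub : E ⊆ unitCube d) (hEfin : volume E ≠ ⊤) :
    relPerimeter (d+1) {y | y 0 ∈ Set.Ioo (0:ℝ) 1 ∧ projL d y ∈ E} (unitCube (d+1))
      ≤ relPerimeter d E (unitCube d) := by
  set E' : Set (EuclideanSpace ℝ (Fin (d+1))) :=
    {y | y 0 ∈ Set.Ioo (0:ℝ) 1 ∧ projL d y ∈ E} with hE'def
  rw [relPerimeter]
  refine iSup_le fun X => iSup_le fun hX1 => iSup_le fun hX2 => iSup_le fun hX3 =>
    iSup_le fun hX4 => ?_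
  by_cases htop : relPerimeter d E (unitCube d) = ⊤
  · rw [htop]; exact le_top
  set c := (relPerimeter d E (unitCube d)).toReal with hcdef
  have hc0 : 0 ≤ c := ENNReal.toReal_nonneg
  suffices h : (∫ y in E', ∑ i, fderiv ℝ X y (EuclideanSpace.single i 1) i) ≤ c by
    calc ENNReal.ofReal (∫ y in E', ∑ i, fderiv ℝ X y (EuclideanSpace.single i 1) i)
        ≤ ENNReal.ofReal c := ENNReal.ofReal_le_ofReal h
      _ = relPerimeter d E (unitCube d) := ENNReal.ofReal_toReal htop
  -- notation
  set μprod : Measure (ℝ × EuclideanSpace ℝ (Fin d)) := (volume : Measure ℝ).prod volume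
    with hμdef
  set s : Set (ℝ × EuclideanSpace ℝ (Fin d)) := Set.Ioo (0:ℝ) 1 ×ˢ E with hsdef
  have hsmeas : MeasurableSet s := measurableSet_Ioo.prod hE
  have hsfin : μprod s ≠ ⊤ := by
    rw [hsdef, hμdef, Measure.prod_prod]
    exact ENNReal.mul_ne_top (by simp [Real.volume_Ioo]) hEfin
  -- the three integrands
  set g₀ : ℝ × EuclideanSpace ℝ (Fin d) → ℝ :=
    fun p => fderiv ℝ X (emb d p.1 p.2) (EuclideanSpace.single (0 : Fin (d+1)) 1) 0 with hg₀def
  set g₁ : ℝ × EuclideanSpace ℝ (Fin d) → ℝ :=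
    fun p => ∑ j : Fin d,
      fderiv ℝ X (emb d p.1 p.2) (EuclideanSpace.single j.succ 1) j.succ with hg₁def
  -- continuity and bounds
  have hdf : Continuous (fderiv ℝ X) := hX1.continuous_fderiv one_ne_zero
  have hdfemb : Continuous (fun p : ℝ × EuclideanSpace ℝ (Fin d) => fderiv ℝ X (emb d p.1 p.2)) :=
    hdf.comp continuous_emb_prod
  have hcont_coord : ∀ i : Fin (d+1), Continuous
      (fun p : ℝ × EuclideanSpace ℝ (Fin d) =>
        fderiv ℝ X (emb d p.1 p.2) (EuclideanSpace.single i 1) i) := by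
    intro i
    exact (EuclideanSpace.proj i).continuous.comp
      (((ContinuousLinearMap.apply ℝ (EuclideanSpace ℝ (Fin (d+1))))
          (EuclideanSpace.single i 1)).continuous.comp hdfemb)
  have hg₀cont : Continuous g₀ := hcont_coord 0
  have hg₁cont : Continuous g₁ := by
    apply continuous_finset_sum
    intro j _
    exact hcont_coord j.succ
  obtain ⟨C, hC⟩ := (hX2.fderiv ℝ).exists_bound_of_continuous hdf
  have hbound : ∀ (i : Fin (d+1)) (p : ℝ × EuclideanSpace ℝ (Fin d)),
      |fderiv ℝ X (emb d p.1 p.2) (EuclideanSpace.single i 1) i| ≤ C := by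
    intro i p
    calc |fderiv ℝ X (emb d p.1 p.2) (EuclideanSpace.single i 1) i|
        ≤ ‖fderiv ℝ X (emb d p.1 p.2) (EuclideanSpace.single i 1)‖ := abs_coord_le_norm _ i
      _ ≤ ‖fderiv ℝ X (emb d p.1 p.2)‖ * ‖EuclideanSpace.single i (1:ℝ)‖ :=
          (fderiv ℝ X (emb d p.1 p.2)).le_opNorm _
      _ ≤ C * ‖EuclideanSpace.single i (1:ℝ)‖ :=
          mul_le_mul_of_nonneg_right (hC _) (norm_nonneg _)
      _ = C := by simp
  have hg₀int : IntegrableOn g₀ s μprod := by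
    apply Measure.integrableOn_of_bounded hsfin hg₀cont.aestronglyMeasurable
    filter_upwards with p
    rw [Real.norm_eq_abs]
    exact hbound 0 p
  have hg₁int : IntegrableOn g₁ s μprod := by
    apply Measure.integrableOn_of_bounded hsfin hg₁cont.aestronglyMeasurable
    · filter_upwards with p
      rw [Real.norm_eq_abs, hg₁def]
      calc |∑ j : Fin d, fderiv ℝ X (emb d p.1 p.2) (EuclideanSpace.single j.succ 1) j.succ|
          ≤ ∑ j : Fin d, |fderiv ℝ X (emb d p.1 p.2) (EuclideanSpace.single j.succ 1) j.succ| :=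
            Finset.abs_sum_le_sum_abs _ _
        _ ≤ ∑ _j : Fin d, C := Finset.sum_le_sum fun j _ => hbound j.succ p
        _ = d * C := by simp [mul_comm]
  -- transfer the integral to the product space
  have hpre : (TEquiv d) ⁻¹' E' = s := by
    ext p
    simp only [Set.mem_preimage, TEquiv_apply, hE'def, Set.mem_setOf_eq, emb_zero, projL_emb,
      hsdef, Set.mem_prod]
  have hstep1 : (∫ y in E', ∑ i, fderiv ℝ X y (EuclideanSpace.single i 1) i)
      = ∫ p in s, (g₀ p + g₁ p) ∂μprod := by
    rw [← (TEquiv_mp d).setIntegral_preimage_emb (TEquiv d).measurableEmbedding _ E', hpre]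
    apply setIntegral_congr_ae hsmeas
    filter_upwards with p _
    rw [TEquiv_apply, hg₀def, hg₁def]
    exact Fin.sum_univ_succ _
  rw [hstep1, integral_add hg₀int hg₁int]
  -- first term vanishes
  have hzero : (∫ p in s, g₀ p ∂μprod) = 0 := by
    rw [← integral_indicator hsmeas]
    have hind : Integrable (s.indicator g₀) μprod := (integrable_indicator_iff hsmeas).2 hg₀int
    rw [integral_prod _ hind]
    rw [integral_integral_swap (f := fun t x => s.indicator g₀ (t, x)) (by exact hind)]
    have hinner : ∀ x : EuclideanSpace ℝ (Fin d),
        (∫ t : ℝ, s.indicator g₀ (t, x)) = 0 := by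
      intro x
      by_cases hx : x ∈ E
      · have heq : (fun t : ℝ => s.indicator g₀ (t, x))
            = (Set.Ioo (0:ℝ) 1).indicator (fun t => g₀ (t, x)) := by
          funext t
          by_cases htt : t ∈ Set.Ioo (0:ℝ) 1
          · rw [Set.indicator_of_mem htt, Set.indicator_of_mem (Set.mk_mem_prod htt hx)]
          · rw [Set.indicator_of_notMem htt, Set.indicator_of_notMem (fun hc => htt hc.1)]
        rw [heq, integral_indicator measurableSet_Ioo]
        exact ftc_coord X hX1 hX3 x
      · have heq : (fun t : ℝ => s.indicator g₀ (t, x)) = fun _ => 0 := by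
          funext t
          exact Set.indicator_of_notMem (fun hc => hx hc.2) _
        rw [heq, integral_zero]
    simp only [hinner, integral_zero]
  rw [hzero, zero_add]
  -- second term: bound each slice by the perimeter of E
  have hB : ∀ t : ℝ, (∫ x in E, g₁ (t, x)) ≤ c := by
    intro t
    have hYle : ENNReal.ofReal (∫ x in E,
        ∑ j : Fin d, fderiv ℝ (Yf X t) x (EuclideanSpace.single j 1) j)
        ≤ relPerimeter d E (unitCube d) := by
      rw [relPerimeter]
      exact le_iSup_of_le (Yf X t) (le_iSup_of_le (contDiff_Yf X hX1 t)
        (le_iSup_of_le (hasCompactSupport_Yf X hX2 t)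
          (le_iSup_of_le (tsupport_Yf_cube X hX3 t)
            (le_iSup_of_le (norm_Yf_le X hX4 t) le_rfl))))
    have heq : (∫ x in E, g₁ (t, x))
        = ∫ x in E, ∑ j : Fin d, fderiv ℝ (Yf X t) x (EuclideanSpace.single j 1) j := by
      apply setIntegral_congr_ae hE
      filter_upwards with x _
      rw [hg₁def]
      exact Finset.sum_congr rfl fun j _ => (fderiv_Yf X hX1 t x j).symm
    rw [heq]
    set B := ∫ x in E, ∑ j : Fin d, fderiv ℝ (Yf X t) x (EuclideanSpace.single j 1) j
    by_cases hBneg : B ≤ 0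
    · exact hBneg.trans hc0
    · push_neg at hBneg
      have := ENNReal.toReal_mono htop hYle
      rwa [ENNReal.toReal_ofReal hBneg.le] at this
  -- Fubini for the second term
  have hstep2 : (∫ p in s, g₁ p ∂μprod)
      = ∫ t in Set.Ioo (0:ℝ) 1, (∫ x in E, g₁ (t, x)) := by
    rw [hsdef, hμdef, setIntegral_prod _ hg₁int]
  rw [hstep2]
  -- integrability of the slice integrals
  have hind₁ : Integrable (s.indicator g₁) μprod := (integrable_indicator_iff hsmeas).2 hg₁int
  have hmarg := hind₁.integral_prod_left
  have hmargeq : (fun t => ∫ x, s.indicator g₁ (t, x))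
      = (Set.Ioo (0:ℝ) 1).indicator (fun t => ∫ x in E, g₁ (t, x)) := by
    funext t
    by_cases ht : t ∈ Set.Ioo (0:ℝ) 1
    · have heq : (fun x : EuclideanSpace ℝ (Fin d) => s.indicator g₁ (t, x))
          = E.indicator (fun x => g₁ (t, x)) := by
        funext x
        by_cases hx : x ∈ E
        · rw [Set.indicator_of_mem hx, Set.indicator_of_mem (Set.mk_mem_prod ht hx)]
        · rw [Set.indicator_of_notMem hx, Set.indicator_of_notMem (fun hc => hx hc.2)]
      rw [heq, integral_indicator hE, Set.indicator_of_mem ht]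
    · have heq : (fun x : EuclideanSpace ℝ (Fin d) => s.indicator g₁ (t, x))
          = fun _ => 0 := by
        funext x
        exact Set.indicator_of_notMem (fun hc => ht hc.1) _
      rw [heq, integral_zero, Set.indicator_of_notMem ht]
  rw [hmargeq] at hmarg
  have hmargint : IntegrableOn (fun t => ∫ x in E, g₁ (t, x)) (Set.Ioo (0:ℝ) 1) :=
    (integrable_indicator_iff measurableSet_Ioo).1 hmarg
  calc (∫ t in Set.Ioo (0:ℝ) 1, (∫ x in E, g₁ (t, x)))
      ≤ ∫ _t in Set.Ioo (0:ℝ) 1, c := by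
        apply setIntegral_mono_on hmargint _ measurableSet_Ioo
        · exact fun t _ => hB t
        · exact integrableOn_const (by simp [Real.volume_Ioo])
    _ = c := by simp [Real.volume_Ioo]

open IsopAux

/-- The isoperimetric profiles of the unit cubes are nonincreasing in the dimension:
`I_{(0,1)^{d+1}}(λ) ≤ I_{(0,1)^d}(λ)` for all `λ ∈ [0,1]` and `d ≥ 1`. -/
theorem stmt8 (d : ℕ) (hd : 1 ≤ d) (l : ℝ) (hl : l ∈ Set.Icc (0 : ℝ) 1) :
    cubeIsopProfile (d + 1) l ≤ cubeIsopProfile d l := by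
  rw [cubeIsopProfile, cubeIsopProfile]
  refine le_iInf fun E => le_iInf fun hE => le_iInf fun hEsub => le_iInf fun hEvol => ?_
  set E' : Set (EuclideanSpace ℝ (Fin (d+1))) :=
    {y | y 0 ∈ Set.Ioo (0:ℝ) 1 ∧ projL d y ∈ E} with hE'def
  have hE' : MeasurableSet E' := by
    have h1 : MeasurableSet ((fun y : EuclideanSpace ℝ (Fin (d+1)) => y 0) ⁻¹' Set.Ioo (0:ℝ) 1) :=
      (EuclideanSpace.proj (0 : Fin (d+1))).continuous.measurable measurableSet_Ioo
    have h2 : MeasurableSet ((projL d) ⁻¹' E) := (projL d).continuous.measurable hE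
    exact h1.inter h2
  have hpre : (TEquiv d) ⁻¹' E' = Set.Ioo (0:ℝ) 1 ×ˢ E := by
    ext p
    simp only [Set.mem_preimage, TEquiv_apply, hE'def, Set.mem_setOf_eq, emb_zero, projL_emb,
      Set.mem_prod]
  have hsub' : E' ⊆ unitCube (d+1) := by
    intro y hy
    intro i
    refine Fin.cases ?_ ?_ i
    · exact hy.1
    · intro j
      have := hEsub hy.2 j
      rwa [projL_apply] at this
  have hvol' : volume E' = ENNReal.ofReal l := by
    have := (TEquiv_mp d).measure_preimage_emb (TEquiv d).measurableEmbedding E'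
    rw [hpre, Measure.prod_prod, Real.volume_Ioo, hEvol] at this
    rw [← this]
    simp
  refine iInf_le_of_le E' (iInf_le_of_le hE' (iInf_le_of_le hsub' (iInf_le_of_le hvol' ?_)))
  exact relPerimeter_cylinder_le d E hE hEsub (by rw [hEvol]; exact ENNReal.ofReal_ne_top)
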